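/- Let G be a cyclic group of order n = p^s for an odd prime p, with n not dividing 2^m + 1 for any m ≥ 1, and let t be the number of distinct 2-cyclotomic cosets modulo n. Then the number of nonzero idempotents e ∈ F₂[G] with e = ê is 2^{(t+1)/2} − 1. -/

import Mathlib

/-- The 2-cyclotomic coset modulo `n` containing `i`. -/
def cyclotomicCoset (n : ℕ) (i : ZMod n) : Set (ZMod n) :=
  {x | ∃ j : ℕ, x = i * 2 ^ j}

/-! ### Number-theoretic lemmas (lifting the exponent) -/

open Finset in
private lemma lcd_lte_step (p : ℕ) (hodd : Odd p) (k j : ℕ) (hk : 1 ≤ k)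
    (h : (p:ℤ)^k ∣ 2^j + 1) : (p:ℤ)^(k+1) ∣ 2^(j*p) + 1 := by
  set x : ℤ := 2^j with hx
  have hgeom : (∑ i ∈ range p, x ^ i * (-1:ℤ) ^ (p - 1 - i)) * (x - (-1)) = x ^ p - (-1) ^ p :=
    geom_sum₂_mul x (-1) p
  have hneg : (-1:ℤ) ^ p = -1 := hodd.neg_one_pow
  have hkey : (x ^ p + 1) = (∑ i ∈ range p, x ^ i * (-1:ℤ) ^ (p - 1 - i)) * (x + 1) := by
    rw [hneg] at hgeom; linarith [hgeom]
  have hpx : (p:ℤ) ∣ x + 1 := dvd_trans (dvd_pow_self (p:ℤ) (by omega : k ≠ 0)) h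
  have hppos : 0 < p := by rcases hodd with ⟨m, hm⟩; omega
  haveI : NeZero p := ⟨by omega⟩
  have hxmod : ((x : ZMod p)) = -1 := by
    have : ((x + 1 : ℤ) : ZMod p) = 0 := by
      rw [ZMod.intCast_zmod_eq_zero_iff_dvd]; exact_mod_cast hpx
    push_cast at this; linear_combination this
  have hsum : (p:ℤ) ∣ (∑ i ∈ range p, x ^ i * (-1:ℤ) ^ (p - 1 - i)) := by
    rw [← ZMod.intCast_zmod_eq_zero_iff_dvd]
    push_cast
    have : ∀ i ∈ range p, (x : ZMod p) ^ i * (-1) ^ (p - 1 - i) = (1 : ZMod p) := by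
      intro i hi
      rw [hxmod, ← pow_add]
      have h2 : i + (p - 1 - i) = p - 1 := by
        have := Finset.mem_range.mp hi; omega
      rw [h2]
      exact Even.neg_one_pow (Nat.Odd.sub_odd hodd odd_one)
    rw [Finset.sum_congr rfl this, Finset.sum_const, Finset.card_range]
    simp
  have key : (p:ℤ)^(k+1) ∣ (∑ i ∈ range p, x ^ i * (-1:ℤ) ^ (p - 1 - i)) * (x + 1) := by
    rw [pow_succ, mul_comm ((p:ℤ)^k) (p:ℤ)]
    exact mul_dvd_mul hsum h
  rw [pow_mul]
  show (p:ℤ)^(k+1) ∣ x ^ p + 1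
  rw [hkey]
  exact key

private lemma lcd_lte_iter (p : ℕ) (hodd : Odd p) (k j c : ℕ) (hk : 1 ≤ k)
    (h : (p:ℤ)^k ∣ 2^j + 1) : (p:ℤ)^(k+c) ∣ 2^(j * p^c) + 1 := by
  induction c with
  | zero => simpa using h
  | succ c ih =>
    have := lcd_lte_step p hodd (k+c) (j * p^c) (by omega) ih
    rw [show j * p^c * p = j * p^(c+1) by ring, show k+c+1 = k+(c+1) by ring] at this
    exact this

private lemma lcd_neg_ne (p s : ℕ) (hp : p.Prime) (hodd : Odd p) (hs : 1 ≤ s)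
    (hdiv : ∀ m : ℕ, 1 ≤ m → ¬ (p ^ s ∣ 2 ^ m + 1))
    (i : ZMod (p ^ s)) (hi : i ≠ 0) (j : ℕ) : -i ≠ i * 2 ^ j := by
  haveI : NeZero (p ^ s) := ⟨pow_ne_zero s hp.ne_zero⟩
  intro heq
  have hzero : (↑(i.val * (2 ^ j + 1)) : ZMod (p ^ s)) = 0 := by
    push_cast
    rw [ZMod.natCast_val, ZMod.cast_id]
    linear_combination -heq
  rw [ZMod.natCast_eq_zero_iff] at hzero
  obtain ⟨a, has, hga⟩ := (Nat.dvd_prime_pow hp).mp (Nat.gcd_dvd_right i.val (p ^ s))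
  have hvalne : i.val ≠ 0 := fun h => hi (ZMod.val_eq_zero i |>.mp h)
  have hvallt : i.val < p ^ s := ZMod.val_lt i
  have hpa_dvd : p ^ a ∣ i.val := hga ▸ Nat.gcd_dvd_left i.val (p ^ s)
  have hppos : 0 < p := hp.pos
  have halt : a < s := by
    by_contra h
    have : p ^ s ∣ i.val := (pow_dvd_pow p (by omega : s ≤ a)).trans hpa_dvd
    have := Nat.le_of_dvd (by omega) this
    omega
  set v := i.val / p ^ a with hv
  have hiv : i.val = p ^ a * v := (Nat.mul_div_cancel' hpa_dvd).symm
  have hpv : ¬ p ∣ v := by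
    intro hpv
    have h1 : p ^ (a+1) ∣ i.val := by
      rw [hiv, pow_succ]
      exact mul_dvd_mul_left (p ^ a) hpv
    have h2 : p ^ (a+1) ∣ p ^ s := pow_dvd_pow p (by omega)
    have h3 : p ^ (a+1) ∣ p ^ a := hga ▸ Nat.dvd_gcd h1 h2
    have h4 : p ^ (a+1) ≤ p ^ a := Nat.le_of_dvd (by positivity) h3
    have h5 : p ^ a < p ^ (a+1) := Nat.pow_lt_pow_right hp.one_lt (Nat.lt_succ_self a)
    omega
  have hcop : Nat.Coprime v (p ^ (s - a)) :=
    (Nat.Prime.coprime_iff_not_dvd hp |>.mpr hpv).symm.pow_right _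
  have hdvd1 : p ^ (s - a) ∣ v * (2 ^ j + 1) := by
    have : p ^ a * p ^ (s - a) ∣ p ^ a * (v * (2 ^ j + 1)) := by
      rw [← pow_add, ← mul_assoc, ← hiv]
      rw [show a + (s - a) = s by omega]
      exact hzero
    exact (mul_dvd_mul_iff_left (by positivity : p ^ a ≠ 0)).mp this
  have hdvd2 : p ^ (s - a) ∣ 2 ^ j + 1 := Nat.Coprime.dvd_of_dvd_mul_left hcop.symm hdvd1
  have hj : 1 ≤ j := by
    by_contra h
    have hj0 : j = 0 := by omega
    rw [hj0] at hdvd2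
    norm_num at hdvd2
    have hpne2 : p ≠ 2 := by rintro rfl; exact (by decide : ¬ Odd 2) hodd
    have h3 : 3 ≤ p := by have := hp.two_le; omega
    have h4 : p ≤ p ^ (s - a) := Nat.le_self_pow (by omega) p
    have h5 : p ^ (s - a) ≤ 2 := Nat.le_of_dvd (by norm_num) hdvd2
    omega
  have hint : (p:ℤ) ^ (s - a) ∣ 2 ^ j + 1 := by exact_mod_cast hdvd2
  have := lcd_lte_iter p hodd (s - a) j a (by omega) hint
  rw [show s - a + a = s by omega] at this
  have hfin : p ^ s ∣ 2 ^ (j * p ^ a) + 1 := by exact_mod_cast this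
  have hm : 1 ≤ j * p ^ a := Nat.mul_pos (by omega) (by positivity)
  exact hdiv (j * p ^ a) hm hfin

/-! ### Combinatorics of cyclotomic cosets -/

section comb
variable (n : ℕ) [NeZero n]

local notation "cc" => cyclotomicCoset n

omit [NeZero n] in
private lemma mem_cc_self (i : ZMod n) : i ∈ cc i := ⟨0, by simp⟩

omit [NeZero n] in
private lemma exists_pow2_inv (hn : Nat.Coprime 2 n) (j : ℕ) :
    ∃ m : ℕ, (2 : ZMod n) ^ j * 2 ^ m = 1 := by
  set u : (ZMod n)ˣ := ZMod.unitOfCoprime 2 hn with hu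
  have hcu : ((u : ZMod n)) = 2 := rfl
  have ho : 1 ≤ orderOf u := orderOf_pos u
  refine ⟨j * (orderOf u - 1), ?_⟩
  rw [← pow_add]
  have h1 : j + j * (orderOf u - 1) = orderOf u * j := by
    cases' Nat.exists_eq_add_of_le ho with k hk
    rw [hk]
    have : 1 + k - 1 = k := by omega
    rw [this]; ring
  rw [h1, pow_mul, ← hcu, ← Units.val_pow_eq_pow_val, pow_orderOf_eq_one u]
  simp

omit [NeZero n] in
private lemma cc_eq_of_mem (hn : Nat.Coprime 2 n) {i x : ZMod n} (hx : x ∈ cc i) :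
    cc x = cc i := by
  obtain ⟨j, rfl⟩ := hx
  ext y
  constructor
  · rintro ⟨l, rfl⟩
    exact ⟨j + l, by rw [pow_add]; ring⟩
  · rintro ⟨l, rfl⟩
    obtain ⟨m, hm⟩ := exists_pow2_inv n hn j
    refine ⟨m + l, ?_⟩
    rw [pow_add]
    calc i * 2 ^ l = (i * (2 ^ j * 2 ^ m)) * 2 ^ l := by rw [hm]; ring
    _ = i * 2 ^ j * (2 ^ m * 2 ^ l) := by ring

omit [NeZero n] in
private lemma cc_zero : cc 0 = {0} := by
  ext x; simp [cyclotomicCoset]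

omit [NeZero n] in
private lemma neg_cc (i : ZMod n) : -(cc i) = cc (-i) := by
  ext x
  simp only [Set.mem_neg, cyclotomicCoset, Set.mem_setOf_eq]
  constructor
  · rintro ⟨j, hj⟩; exact ⟨j, by linear_combination -hj⟩
  · rintro ⟨j, hj⟩; exact ⟨j, by linear_combination -hj⟩

/-- The union of cyclotomic cosets of `i` and `-i`. -/
def ddCoset (i : ZMod n) : Set (ZMod n) := cc i ∪ cc (-i)

local notation "dd" => ddCoset n

omit [NeZero n] in
private lemma dd_symm (i : ZMod n) : dd (-i) = dd i := by
  unfold ddCoset; rw [neg_neg, Set.union_comm]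

omit [NeZero n] in
private lemma mem_dd_self (i : ZMod n) : i ∈ dd i := Set.mem_union_left _ (mem_cc_self n i)

omit [NeZero n] in
private lemma dd_eq_of_mem (hn : Nat.Coprime 2 n) {i x : ZMod n} (hx : x ∈ dd i) :
    dd x = dd i := by
  rcases hx with hx | hx
  · have h1 : cc x = cc i := cc_eq_of_mem n hn hx
    have h2 : cc (-x) = cc (-i) := by
      rw [← neg_cc, ← neg_cc, h1]
    unfold ddCoset; rw [h1, h2]
  · have h1 : cc x = cc (-i) := cc_eq_of_mem n hn hx
    have h2 : cc (-x) = cc i := by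
      rw [← neg_cc, h1, neg_cc, neg_neg]
    unfold ddCoset; rw [h1, h2, Set.union_comm]

omit [NeZero n] in
private lemma dd_zero : dd 0 = {0} := by
  unfold ddCoset; rw [neg_zero, cc_zero, Set.union_self]

omit [NeZero n] in
private lemma dd_two_mul (hn : Nat.Coprime 2 n) (x : ZMod n) : dd (2 * x) = dd x :=
  dd_eq_of_mem n hn (Set.mem_union_left _ ⟨1, by ring⟩)

private lemma card_cc_eq_two_mul (hn : Nat.Coprime 2 n)
    (hne : ∀ i : ZMod n, i ≠ 0 → ∀ j : ℕ, -i ≠ i * 2 ^ j) :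
    Set.ncard {S : Set (ZMod n) | ∃ i, S = cc i}
      = 2 * Set.ncard {S : Set (ZMod n) | ∃ i, S = dd i} - 1 := by
  classical
  set A : Finset (Set (ZMod n)) := Finset.image (cc) Finset.univ with hA
  set B : Finset (Set (ZMod n)) := Finset.image (dd) Finset.univ with hB
  have hsetA : {S : Set (ZMod n) | ∃ i, S = cc i} = ↑A := by
    ext S; simp [hA, eq_comm]
  have hsetB : {S : Set (ZMod n) | ∃ i, S = dd i} = ↑B := by
    ext S; simp [hB, eq_comm]
  rw [hsetA, hsetB, Set.ncard_coe_finset, Set.ncard_coe_finset]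
  set φ : Set (ZMod n) → Set (ZMod n) := fun S => S ∪ -S with hφ
  have hφcc : ∀ i : ZMod n, φ (cc i) = dd i := by
    intro i; simp only [hφ, neg_cc]; rfl
  have hmaps : ∀ S ∈ A, φ S ∈ B := by
    intro S hS
    obtain ⟨i, -, rfl⟩ := Finset.mem_image.mp hS
    rw [hφcc]
    exact Finset.mem_image.mpr ⟨i, Finset.mem_univ i, rfl⟩
  have hcard := Finset.card_eq_sum_card_fiberwise hmaps
  have hd0B : dd 0 ∈ B := Finset.mem_image.mpr ⟨0, Finset.mem_univ 0, rfl⟩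
  have fib : ∀ b ∈ B, (A.filter fun S => φ S = b).card = if b = dd 0 then 1 else 2 := by
    intro b hbB
    obtain ⟨i, -, rfl⟩ := Finset.mem_image.mp hbB
    by_cases hi : i = 0
    · subst hi
      rw [if_pos rfl]
      rw [Finset.card_eq_one]
      refine ⟨cc 0, ?_⟩
      ext S
      simp only [Finset.mem_filter, Finset.mem_singleton]
      constructor
      · rintro ⟨hSA, hSb⟩
        obtain ⟨x, -, rfl⟩ := Finset.mem_image.mp hSA
        rw [hφcc] at hSb
        have hx0 : x = 0 := by
          have := mem_dd_self n x
          rw [hSb, dd_zero] at this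
          simpa using this
        rw [hx0]
      · rintro rfl
        refine ⟨Finset.mem_image.mpr ⟨0, Finset.mem_univ 0, rfl⟩, ?_⟩
        rw [hφcc]
    · have hine : dd i ≠ dd 0 := by
        intro h
        have := mem_dd_self n i
        rw [h, dd_zero] at this
        exact hi (by simpa using this)
      rw [if_neg hine]
      have hfil : A.filter (fun S => φ S = dd i) = {cc i, cc (-i)} := by
        ext S
        simp only [Finset.mem_filter, Finset.mem_insert, Finset.mem_singleton]
        constructor
        · rintro ⟨hSA, hSb⟩
          obtain ⟨x, -, rfl⟩ := Finset.mem_image.mp hSA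
          rw [hφcc] at hSb
          have hx : x ∈ dd i := by rw [← hSb]; exact mem_dd_self n x
          rcases hx with hx | hx
          · exact Or.inl (cc_eq_of_mem n hn hx)
          · exact Or.inr (cc_eq_of_mem n hn hx)
        · rintro (rfl | rfl)
          · exact ⟨Finset.mem_image.mpr ⟨i, Finset.mem_univ i, rfl⟩, hφcc i⟩
          · refine ⟨Finset.mem_image.mpr ⟨-i, Finset.mem_univ _, rfl⟩, ?_⟩
            rw [hφcc, dd_symm]
      rw [hfil]
      rw [Finset.card_insert_of_notMem, Finset.card_singleton]
      simp only [Finset.mem_singleton]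
      intro h
      have : -i ∈ cc i := by
        rw [h]; exact mem_cc_self n (-i)
      obtain ⟨j, hj⟩ := this
      exact hne i hi j hj
  rw [hcard, Finset.sum_congr rfl fib]
  rw [← Finset.sum_erase_add _ _ hd0B, if_pos rfl]
  have herase : ∀ b ∈ B.erase (dd 0), (if b = dd 0 then 1 else 2) = 2 := by
    intro b hb
    rw [if_neg (Finset.ne_of_mem_erase hb)]
  rw [Finset.sum_congr rfl herase, Finset.sum_const, Finset.card_erase_of_mem hd0B]
  have hBpos : 1 ≤ B.card := Finset.card_pos.mpr ⟨dd 0, hd0B⟩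
  rw [smul_eq_mul]
  omega

omit [NeZero n] in
private lemma const_on_dd {v : ZMod n → ZMod 2}
    (h2 : ∀ x, v (2 * x) = v x) (hneg : ∀ x, v (-x) = v x)
    {x y : ZMod n} (hy : y ∈ dd x) : v y = v x := by
  have hpow : ∀ (z : ZMod n) (j : ℕ), v (z * 2 ^ j) = v z := by
    intro z j
    induction j with
    | zero => simp
    | succ j ih =>
      have : z * 2 ^ (j + 1) = 2 * (z * 2 ^ j) := by ring
      rw [this, h2, ih]
  rcases hy with ⟨j, rfl⟩ | ⟨j, rfl⟩
  · exact hpow x j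
  · have : -x * 2 ^ j = -(x * 2 ^ j) := by ring
    rw [this, hneg, hpow]

private lemma card_funcs (hn : Nat.Coprime 2 n) :
    Set.ncard {v : ZMod n → ZMod 2 | (∀ x, v (2 * x) = v x) ∧ (∀ x, v (-x) = v x)}
      = 2 ^ Set.ncard {S : Set (ZMod n) | ∃ i, S = dd i} := by
  classical
  set T : Set (Set (ZMod n)) := {S | ∃ i, S = dd i} with hT
  haveI : Finite ↥T := Subtype.finite
  set F : (↥T → ZMod 2) → (ZMod n → ZMod 2) :=
    fun w x => w ⟨dd x, ⟨x, rfl⟩⟩ with hF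
  have Finj : Function.Injective F := by
    intro w w' h
    funext b
    obtain ⟨S, hS⟩ := b
    obtain ⟨i, rfl⟩ := hS
    exact congrFun h i
  have hrange : Set.range F =
      {v : ZMod n → ZMod 2 | (∀ x, v (2 * x) = v x) ∧ (∀ x, v (-x) = v x)} := by
    ext v
    constructor
    · rintro ⟨w, rfl⟩
      constructor
      · intro x
        show w ⟨dd (2 * x), _⟩ = w ⟨dd x, _⟩
        congr 1
        exact Subtype.ext (dd_two_mul n hn x)
      · intro x
        show w ⟨dd (-x), _⟩ = w ⟨dd x, _⟩
        congr 1
        exact Subtype.ext (dd_symm n x)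
    · rintro ⟨h2, hneg⟩
      refine ⟨fun b => v (Classical.choose b.2), ?_⟩
      funext x
      show v (Classical.choose (⟨x, rfl⟩ : ∃ i, dd x = dd i)) = v x
      have hex : ∃ i : ZMod n, dd x = dd i := ⟨x, rfl⟩
      have hspec : dd x = dd (Classical.choose hex) := Classical.choose_spec hex
      have hmem : Classical.choose hex ∈ dd x := by
        exact hspec.symm.subset (mem_dd_self n _)
      exact const_on_dd n h2 hneg hmem
  calc Set.ncard {v : ZMod n → ZMod 2 | (∀ x, v (2 * x) = v x) ∧ (∀ x, v (-x) = v x)}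
      = Set.ncard (Set.range F) := by rw [hrange]
    _ = Set.ncard (F '' Set.univ) := by rw [Set.image_univ]
    _ = Set.ncard (Set.univ : Set (↥T → ZMod 2)) := Set.ncard_image_of_injective _ Finj
    _ = Nat.card (↥T → ZMod 2) := Set.ncard_univ _
    _ = Nat.card (ZMod 2) ^ Nat.card ↥T := Nat.card_fun
    _ = 2 ^ Set.ncard T := by rw [Nat.card_eq_fintype_card, ZMod.card, Nat.card_coe_set_eq]

end comb

/-! ### Group algebra lemmas -/

section alg
variable {G : Type*} [Group G]

private lemma lcd_addself (x : MonoidAlgebra (ZMod 2) G) : x + x = 0 := by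
  rw [← two_smul (ZMod 2) x, show (2 : ZMod 2) = 0 by decide, zero_smul]

private lemma lcd_ma_mul_comm (hG : ∀ a b : G, a * b = b * a)
    (x y : MonoidAlgebra (ZMod 2) G) : x * y = y * x := by
  letI : CommGroup G := { (inferInstance : Group G) with mul_comm := hG }
  exact mul_comm x y

private lemma lcd_mul_self_eq (hG : ∀ a b : G, a * b = b * a)
    (e : MonoidAlgebra (ZMod 2) G) :
    e * e = MonoidAlgebra.ofCoeff (Finsupp.mapDomain (fun g => g * g) e.coeff) := by
  induction e using MonoidAlgebra.induction with
  | zero => simp [Finsupp.mapDomain_zero]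
  | single_add a b f ha hb ih =>
    rw [MonoidAlgebra.coeff_add, MonoidAlgebra.coeff_single, Finsupp.mapDomain_add,
      Finsupp.mapDomain_single]
    let sg : MonoidAlgebra (ZMod 2) G := MonoidAlgebra.single a b
    let f' : MonoidAlgebra (ZMod 2) G := f
    show (sg + f') * (sg + f') = MonoidAlgebra.single (a * a) b +
      MonoidAlgebra.ofCoeff (Finsupp.mapDomain (fun g => g * g) f.coeff)
    rw [← ih]
    have expand : (sg + f') * (sg + f') = sg * sg + sg * f' + (f' * sg + f' * f') := by
      rw [add_mul, mul_add, mul_add]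
    rw [expand, lcd_ma_mul_comm hG f' sg]
    have regroup : sg * sg + sg * f' + (sg * f' + f' * f')
        = sg * sg + f' * f' + (sg * f' + sg * f') := by abel
    rw [regroup, lcd_addself, add_zero]
    show MonoidAlgebra.single a b * MonoidAlgebra.single a b + f' * f' = _
    rw [MonoidAlgebra.single_mul_single]
    have hbb : ∀ c : ZMod 2, c * c = c := by decide
    rw [hbb b]

omit [Group G] in
private lemma lcd_mapDomain_eq_self_iff {f : G → G} (hf : Function.Bijective f)
    (e : G →₀ ZMod 2) :
    Finsupp.mapDomain f e = e ↔ ∀ g, e (f g) = e g := by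
  constructor
  · intro h g
    have := Finsupp.mapDomain_apply hf.injective e g
    rw [h] at this
    exact this
  · intro h
    ext x
    obtain ⟨g, rfl⟩ := hf.surjective x
    rw [Finsupp.mapDomain_apply hf.injective, h g]

end alg

/-! ### Main theorem -/

theorem count_lcd_group_codes_prime_pow {G : Type*} [Group G] [Fintype G]
    (hcyc : IsCyclic G) (p s : ℕ) (hp : p.Prime) (hodd : Odd p) (hs : 1 ≤ s)
    (hcard : Fintype.card G = p ^ s)
    (hdiv : ∀ m : ℕ, 1 ≤ m → ¬ (p ^ s ∣ 2 ^ m + 1))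
    (t : ℕ)
    (ht : t = Set.ncard {S : Set (ZMod (p ^ s)) | ∃ i : ZMod (p ^ s), S = cyclotomicCoset (p ^ s) i}) :
    Set.ncard {e : MonoidAlgebra (ZMod 2) G |
        e ≠ 0 ∧ e * e = e ∧ Finsupp.mapDomain (fun g : G => g⁻¹) e.coeff = e.coeff}
      = 2 ^ ((t + 1) / 2) - 1 := by
  classical
  haveI : NeZero (p ^ s) := ⟨pow_ne_zero s hp.ne_zero⟩
  set n := p ^ s with hn
  -- 2 is coprime to n
  have hn2 : Nat.Coprime 2 n := by
    have h2p : Nat.Coprime 2 p := by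
      rw [Nat.Prime.coprime_iff_not_dvd Nat.prime_two]
      intro h
      rw [Nat.odd_iff] at hodd
      omega
    exact h2p.pow_right s
  -- commutativity of G
  haveI := hcyc
  have hcomm : ∀ a b : G, a * b = b * a := fun a b =>
    (IsCyclic.commGroup (α := G)).mul_comm a b
  -- generator and the bijection ψ : ZMod n → G
  obtain ⟨g0, hg0⟩ := hcyc.exists_generator
  have horder : orderOf g0 = n := by
    rw [orderOf_eq_card_of_forall_mem_zpowers hg0, Nat.card_eq_fintype_card, hcard]
  set ψ : ZMod n → G := fun x => g0 ^ x.val with hψ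
  have hψcast : ∀ m : ℕ, ψ (↑m) = g0 ^ m := by
    intro m
    show g0 ^ (↑m : ZMod n).val = g0 ^ m
    rw [pow_eq_pow_iff_modEq, horder, ZMod.val_natCast]
    exact (Nat.mod_modEq m n)
  have hψinj : Function.Injective ψ := by
    intro x y h
    have := (pow_eq_pow_iff_modEq).mp h
    rw [horder] at this
    have hx := ZMod.val_lt x
    have hy := ZMod.val_lt y
    have : x.val = y.val := by
      have := this
      unfold Nat.ModEq at this
      rwa [Nat.mod_eq_of_lt hx, Nat.mod_eq_of_lt hy] at this
    calc x = ↑x.val := (ZMod.natCast_rightInverse x).symm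
    _ = ↑y.val := by rw [this]
    _ = y := ZMod.natCast_rightInverse y
  have hψbij : Function.Bijective ψ := by
    rw [Fintype.bijective_iff_injective_and_card]
    exact ⟨hψinj, by rw [ZMod.card, hcard]⟩
  have hcastval : ∀ x : ZMod n, (↑x.val : ZMod n) = x := fun x => ZMod.natCast_rightInverse x
  have hψmul : ∀ x : ZMod n, ψ (2 * x) = ψ x * ψ x := by
    intro x
    have h1 : (2 : ZMod n) * x = ↑(2 * x.val) := by
      push_cast [hcastval]; ring
    rw [h1, hψcast, show 2 * x.val = x.val + x.val by ring, pow_add]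
  have hψneg : ∀ x : ZMod n, ψ (-x) = (ψ x)⁻¹ := by
    intro x
    have hle : x.val ≤ n := (ZMod.val_lt x).le
    have h1 : (-x : ZMod n) = ↑(n - x.val) := by
      rw [Nat.cast_sub hle, hcastval]
      simp
    rw [h1, hψcast]
    have hmul : ψ x * g0 ^ (n - x.val) = 1 := by
      show g0 ^ x.val * g0 ^ (n - x.val) = 1
      rw [← pow_add, show x.val + (n - x.val) = n by omega, ← hcard, pow_card_eq_one]
    have hmul' : g0 ^ (n - x.val) * ψ x = 1 := by
      rw [hcomm (g0 ^ (n - x.val)) (ψ x)]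
      exact hmul
    exact eq_inv_of_mul_eq_one_left hmul'
  -- squaring is bijective on G
  have hsqbij : Function.Bijective (fun g : G => g * g) := by
    have hinj : Function.Injective (fun g : G => g * g) := by
      intro g h hgh
      obtain ⟨x, rfl⟩ := hψbij.surjective g
      obtain ⟨y, rfl⟩ := hψbij.surjective h
      simp only [← hψmul] at hgh
      have h2x : (2 : ZMod n) * x = 2 * y := hψinj hgh
      have hu : IsUnit (2 : ZMod n) := ⟨ZMod.unitOfCoprime 2 hn2, rfl⟩
      exact congrArg ψ (hu.mul_left_cancel h2x)
    exact Finite.injective_iff_bijective.mp hinj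
  have hinvbij : Function.Bijective (fun g : G => g⁻¹) :=
    (inv_involutive (G := G)).bijective
  -- the transport equivalence
  set ψE : ZMod n ≃ G := Equiv.ofBijective ψ hψbij with hψE
  set E : MonoidAlgebra (ZMod 2) G ≃ (ZMod n → ZMod 2) :=
    (MonoidAlgebra.coeffEquiv.trans Finsupp.equivFunOnFinite).trans (Equiv.arrowCongr ψE.symm (Equiv.refl (ZMod 2))) with hE
  have hEapp : ∀ (e : MonoidAlgebra (ZMod 2) G) (x : ZMod n), E e x = e.coeff (ψ x) := by
    intro e x
    simp [hE, hψE, Equiv.arrowCongr]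
  -- target set as preimage
  set CP' : Set (ZMod n → ZMod 2) :=
    {v | v ≠ 0 ∧ (∀ x, v (2 * x) = v x) ∧ (∀ x, v (-x) = v x)} with hCP'
  have hSpre : {e : MonoidAlgebra (ZMod 2) G |
      e ≠ 0 ∧ e * e = e ∧ Finsupp.mapDomain (fun g : G => g⁻¹) e.coeff = e.coeff} = E ⁻¹' CP' := by
    ext e
    simp only [Set.mem_setOf_eq, Set.mem_preimage, hCP']
    constructor
    · rintro ⟨hne, hsq, hinv⟩
      refine ⟨?_, ?_, ?_⟩
      · intro h0
        apply hne
        have : E e = E 0 := by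
          rw [h0]; funext x; rw [hEapp]; simp
        exact E.injective this
      · intro x
        rw [hEapp, hEapp, hψmul]
        rw [lcd_mul_self_eq hcomm, ← MonoidAlgebra.coeff_inj, MonoidAlgebra.coeff_ofCoeff] at hsq
        exact (lcd_mapDomain_eq_self_iff hsqbij e.coeff).mp hsq (ψ x)
      · intro x
        rw [hEapp, hEapp, hψneg]
        exact (lcd_mapDomain_eq_self_iff hinvbij e.coeff).mp hinv (ψ x)
    · rintro ⟨hne, hsq, hinv⟩
      refine ⟨?_, ?_, ?_⟩
      · intro h0
        apply hne
        rw [h0]; funext x; rw [hEapp]; simp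
      · rw [lcd_mul_self_eq hcomm, ← MonoidAlgebra.coeff_inj, MonoidAlgebra.coeff_ofCoeff]
        rw [lcd_mapDomain_eq_self_iff hsqbij e.coeff]
        intro g
        obtain ⟨x, rfl⟩ := hψbij.surjective g
        have := hsq x
        rw [hEapp, hEapp, hψmul] at this
        exact this
      · rw [lcd_mapDomain_eq_self_iff hinvbij e.coeff]
        intro g
        obtain ⟨x, rfl⟩ := hψbij.surjective g
        have := hinv x
        rw [hEapp, hEapp, hψneg] at this
        exact this
  rw [hSpre]
  -- compute ncard of preimage via the equivalence
  have hpreim : E ⁻¹' CP' = E.symm '' CP' := by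
    rw [Equiv.image_eq_preimage_symm]
    simp
  rw [hpreim, Set.ncard_image_of_injective _ E.symm.injective]
  -- CP' = CP \ {0}
  set CP : Set (ZMod n → ZMod 2) :=
    {v | (∀ x, v (2 * x) = v x) ∧ (∀ x, v (-x) = v x)} with hCP
  have hCPdiff : CP' = CP \ {0} := by
    ext v
    simp only [hCP', hCP, Set.mem_setOf_eq, Set.mem_diff, Set.mem_singleton_iff]
    tauto
  have h0CP : (0 : ZMod n → ZMod 2) ∈ CP := ⟨fun x => rfl, fun x => rfl⟩
  rw [hCPdiff, Set.ncard_diff_singleton_of_mem h0CP]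
  -- count CP
  rw [card_funcs n hn2]
  -- relate t to the dd count
  have hne := lcd_neg_ne p s hp hodd hs hdiv
  have htt := card_cc_eq_two_mul n hn2 hne
  rw [← ht] at htt
  -- positivity of the dd count
  have hd0 : ddCoset n 0 ∈ {S : Set (ZMod n) | ∃ i, S = ddCoset n i} := ⟨0, rfl⟩
  have hpos : 1 ≤ Set.ncard {S : Set (ZMod n) | ∃ i, S = ddCoset n i} := by
    rw [Nat.one_le_iff_ne_zero, ← Nat.pos_iff_ne_zero]
    rw [Set.ncard_pos (Set.toFinite _)]
    exact ⟨_, hd0⟩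
  have harith : (t + 1) / 2 = Set.ncard {S : Set (ZMod n) | ∃ i, S = ddCoset n i} := by
    omega
  rw [harith]
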